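/- For every profile of matroid rank hospital valuations and strict complete doctor preference orders, there exists a stable allocation that maximizes hospital utilitarian welfare over all allocations. -/

import Mathlib

open Finset

/-- A matroid rank function on subsets of a finite ground set. -/
def IsMRF {α : Type*} [DecidableEq α] (v : Finset α → ℤ) : Prop :=
  v ∅ = 0 ∧
  (∀ (S : Finset α) (d : α), d ∉ S →
    v (insert d S) - v S = 0 ∨ v (insert d S) - v S = 1) ∧
  (∀ (S T : Finset α) (d : α), S ⊆ T → d ∉ T →
    v (insert d T) - v T ≤ v (insert d S) - v S)

/-- The bundle of doctors assigned to hospital `h` under allocation `X`. -/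
def bundle {n m : ℕ} (X : Fin m → Option (Fin n)) (h : Fin n) : Finset (Fin m) :=
  Finset.univ.filter (fun d => X d = some h)

/-- An allocation is non-redundant if every hospital's bundle is independent. -/
def NonRedundant {n m : ℕ} (v : Fin n → Finset (Fin m) → ℤ)
    (X : Fin m → Option (Fin n)) : Prop :=
  ∀ h, v h (bundle X h) = (bundle X h).card

/-- Hospital utilitarian welfare. -/
def USW {n m : ℕ} (v : Fin n → Finset (Fin m) → ℤ) (X : Fin m → Option (Fin n)) : ℤ :=
  ∑ h, v h (bundle X h)

/-- Doctor `d` strictly prefers the first outcome to the second; every hospital is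
strictly preferred to being unallocated (`none`). -/
def OptStrictPref {n m : ℕ} (P : Fin m → Fin n → Fin n → Prop) (d : Fin m) :
    Option (Fin n) → Option (Fin n) → Prop
  | some h, some h' => P d h h'
  | some _, none => True
  | none, _ => False

/-- `(h, S)` is a blocking pair for `X`. -/
def IsBlockingPair {n m : ℕ} (v : Fin n → Finset (Fin m) → ℤ)
    (P : Fin m → Fin n → Fin n → Prop) (X : Fin m → Option (Fin n))
    (h : Fin n) (S : Finset (Fin m)) : Prop :=
  v h S = S.card ∧ v h (bundle X h) < v h S ∧
    ∀ d ∈ S, X d = some h ∨ OptStrictPref P d (some h) (X d)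

/-- An allocation is stable if it is non-redundant and admits no blocking pair. -/
def Stable {n m : ℕ} (v : Fin n → Finset (Fin m) → ℤ)
    (P : Fin m → Fin n → Fin n → Prop) (X : Fin m → Option (Fin n)) : Prop :=
  NonRedundant v X ∧ ¬ ∃ h S, IsBlockingPair v P X h S

section MRF

variable {α : Type*} [DecidableEq α] {v : Finset α → ℤ}

lemma IsMRF.marg01 (hv : IsMRF v) {S : Finset α} {d : α} (hd : d ∉ S) :
    v (insert d S) = v S ∨ v (insert d S) = v S + 1 := by
  rcases hv.2.1 S d hd with h | h
  · left; omega
  · right; omega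

lemma IsMRF.mono (hv : IsMRF v) : ∀ {S T : Finset α}, S ⊆ T → v S ≤ v T := by
  suffices H : ∀ (k : ℕ) (S T : Finset α), S ⊆ T → (T \ S).card = k → v S ≤ v T by
    intro S T hST; exact H _ S T hST rfl
  intro k
  induction k with
  | zero =>
    intro S T hST hc
    have h0 : T \ S = ∅ := Finset.card_eq_zero.mp hc
    have h1 : T ⊆ S := by
      intro x hx
      by_contra hxS
      have : x ∈ T \ S := Finset.mem_sdiff.mpr ⟨hx, hxS⟩
      simp [h0] at this
    have : S = T := Finset.Subset.antisymm hST h1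
    simp [this]
  | succ k ih =>
    intro S T hST hc
    have hne : (T \ S).Nonempty := by
      rw [← Finset.card_pos, hc]; omega
    obtain ⟨d, hd⟩ := hne
    have hdT : d ∈ T := (Finset.mem_sdiff.mp hd).1
    have hdS : d ∉ S := (Finset.mem_sdiff.mp hd).2
    have h1 : v S ≤ v (insert d S) := by rcases hv.marg01 hdS with h | h <;> omega
    have h2 : v (insert d S) ≤ v T := by
      apply ih
      · exact Finset.insert_subset hdT hST
      · rw [Finset.sdiff_insert, Finset.card_erase_of_mem hd, hc]; omega
    omega

lemma IsMRF.nonneg (hv : IsMRF v) (S : Finset α) : 0 ≤ v S := by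
  have := hv.mono (Finset.empty_subset S)
  rw [hv.1] at this
  exact this

lemma IsMRF.le_card (hv : IsMRF v) : ∀ S : Finset α, v S ≤ S.card := by
  intro S
  induction S using Finset.induction_on with
  | empty => simp [hv.1]
  | @insert a s ha ih =>
    have := hv.marg01 ha
    rw [Finset.card_insert_of_notMem ha]
    push_cast
    omega

lemma IsMRF.erase_eq (hv : IsMRF v) {S : Finset α} {d : α} (hd : d ∈ S) :
    v (S.erase d) = v S ∨ v (S.erase d) = v S - 1 := by
  have h1 : insert d (S.erase d) = S := Finset.insert_erase hd
  have := hv.marg01 (Finset.notMem_erase d S)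
  rw [h1] at this
  omega

lemma IsMRF.exists_removable (hv : IsMRF v) :
    ∀ S : Finset α, v S < S.card → ∃ d ∈ S, v (S.erase d) = v S := by
  suffices H : ∀ (k : ℕ) (S : Finset α), S.card ≤ k → v S < S.card →
      ∃ d ∈ S, v (S.erase d) = v S by
    intro S; exact H S.card S le_rfl
  intro k
  induction k with
  | zero =>
    intro S hk hlt
    have := hv.nonneg S
    omega
  | succ k ih =>
    intro S hk hlt
    have hpos : 0 < S.card := by
      have := hv.nonneg S; omega
    obtain ⟨d, hd⟩ := Finset.card_pos.mp hpos
    rcases hv.erase_eq hd with heq | hm1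
    · exact ⟨d, hd, heq⟩
    · have hc1 : (S.erase d).card = S.card - 1 := Finset.card_erase_of_mem hd
      have hlt' : v (S.erase d) < (S.erase d).card := by
        rw [hc1]; push_cast [Nat.cast_sub hpos]; omega
      obtain ⟨d', hd'mem, hd'⟩ := ih (S.erase d) (by omega) hlt'
      have hd'S : d' ∈ S := Finset.mem_of_mem_erase hd'mem
      have hd'ne : d' ≠ d := Finset.ne_of_mem_erase hd'mem
      set U := (S.erase d).erase d' with hU
      have hdU : d ∉ U := fun hc => Finset.notMem_erase d S (Finset.mem_of_mem_erase hc)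
      have hsub : U ⊆ S.erase d := Finset.erase_subset _ _
      have hdnot : d ∉ S.erase d := Finset.notMem_erase d S
      have hdim := hv.2.2 U (S.erase d) d hsub hdnot
      rw [Finset.insert_erase hd] at hdim
      have hm : v (insert d U) = v U + 1 := by
        rcases hv.marg01 hdU with h | h <;> omega
      have hins : insert d U = S.erase d' := by
        rw [hU, Finset.erase_right_comm]
        exact Finset.insert_erase (Finset.mem_erase.mpr ⟨fun hc => hd'ne hc.symm, hd⟩)
      refine ⟨d', hd'S, ?_⟩
      rw [← hins, hm, hd']
      omega

lemma IsMRF.union_eq (hv : IsMRF v) (T : Finset α) :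
    ∀ S : Finset α, (∀ d ∈ S, d ∉ T → v (insert d T) = v T) → v (S ∪ T) = v T := by
  intro S
  induction S using Finset.induction_on with
  | empty => simp
  | @insert a s ha ih =>
    intro hcl
    have hS : v (s ∪ T) = v T := ih (fun d hd => hcl d (Finset.mem_insert_of_mem hd))
    rw [Finset.insert_union]
    by_cases haT : a ∈ s ∪ T
    · rw [Finset.insert_eq_self.mpr haT, hS]
    · have haT' : a ∉ T := fun hc => haT (Finset.mem_union_right _ hc)
      have h0 : v (insert a T) = v T := hcl a (Finset.mem_insert_self a s) haT'
      have hdim := hv.2.2 T (s ∪ T) a Finset.subset_union_right haT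
      have := hv.marg01 haT
      have := hv.marg01 haT'
      omega

lemma IsMRF.exists_augment (hv : IsMRF v) {S T : Finset α} (h : v T < v S) :
    ∃ d ∈ S, d ∉ T ∧ v (insert d T) = v T + 1 := by
  by_contra hc
  push_neg at hc
  have hcl : ∀ d ∈ S, d ∉ T → v (insert d T) = v T := by
    intro d hd hdT
    rcases hv.marg01 hdT with h' | h'
    · exact h'
    · exact absurd h' (hc d hd hdT)
  have h1 := hv.union_eq T S hcl
  have h2 : v S ≤ v (S ∪ T) := hv.mono Finset.subset_union_left
  omega

end MRF

lemma mem_bundle {n m : ℕ} {X : Fin m → Option (Fin n)} {d : Fin m} {g : Fin n} :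
    d ∈ bundle X g ↔ X d = some g := by
  simp [bundle]

lemma bundle_update {n m : ℕ} (X : Fin m → Option (Fin n)) (d : Fin m)
    (a : Option (Fin n)) (g : Fin n) :
    bundle (Function.update X d a) g =
      if a = some g then insert d ((bundle X g).erase d) else (bundle X g).erase d := by
  ext e
  rcases eq_or_ne e d with rfl | he
  · by_cases h : a = some g <;>
      simp [bundle, Function.update_self, h, Finset.notMem_erase]
  · by_cases h : a = some g <;>
      simp [bundle, Function.update_of_ne he, h, he, Finset.mem_erase, Finset.mem_insert]

open Classical in
noncomputable def rnk {n m : ℕ} (P : Fin m → Fin n → Fin n → Prop) (d : Fin m) :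
    Option (Fin n) → ℕ
  | none => 0
  | some h => (Finset.univ.filter (fun h'' => ¬ P d h'' h)).card

lemma rnk_lt {n m : ℕ} {P : Fin m → Fin n → Fin n → Prop} {d : Fin m}
    (hP : IsStrictTotalOrder (Fin n) (P d)) {a b : Option (Fin n)}
    (hab : OptStrictPref P d a b) : rnk P d b < rnk P d a := by
  classical
  have hirr : ∀ x, ¬ P d x x := hP.toIsStrictOrder.toIrrefl.irrefl
  have htr : ∀ x y z, P d x y → P d y z → P d x z := hP.toIsStrictOrder.toIsTrans.trans
  match a, b with
  | some h, none =>
    simp only [rnk]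
    refine Finset.card_pos.mpr ⟨h, ?_⟩
    simp only [Finset.mem_filter, Finset.mem_univ, true_and]
    exact hirr h
  | some h, some h' =>
    have hpp : P d h h' := hab
    simp only [rnk]
    apply Finset.card_lt_card
    rw [Finset.ssubset_iff_of_subset]
    · refine ⟨h, ?_, ?_⟩
      · simp only [Finset.mem_filter, Finset.mem_univ, true_and]; exact hirr h
      · simp only [Finset.mem_filter, Finset.mem_univ, true_and, not_not]; exact hpp
    · intro x hx
      simp only [Finset.mem_filter, Finset.mem_univ, true_and] at hx ⊢
      intro hxh
      exact hx (htr x h h' hxh hpp)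

lemma exists_nonredundant {n m : ℕ} (v : Fin n → Finset (Fin m) → ℤ)
    (hv : ∀ h, IsMRF (v h)) :
    ∀ X : Fin m → Option (Fin n), ∃ X', NonRedundant v X' ∧ USW v X' = USW v X := by
  suffices H : ∀ (k : ℕ) (X : Fin m → Option (Fin n)),
      (∑ h, (bundle X h).card) ≤ k → ∃ X', NonRedundant v X' ∧ USW v X' = USW v X by
    intro X; exact H _ X le_rfl
  intro k
  induction k with
  | zero =>
    intro X hX
    refine ⟨X, fun h => ?_, rfl⟩
    have h0 : (bundle X h).card = 0 := by
      have h1 : (∑ h, (bundle X h).card) = 0 := Nat.le_zero.mp hX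
      exact (Finset.sum_eq_zero_iff.mp h1) h (Finset.mem_univ h)
    rw [Finset.card_eq_zero.mp h0]
    simp [(hv h).1]
  | succ k ih =>
    intro X hX
    by_cases hnr : NonRedundant v X
    · exact ⟨X, hnr, rfl⟩
    · simp only [NonRedundant, not_forall] at hnr
      obtain ⟨h, hh⟩ := hnr
      have hlt : v h (bundle X h) < (bundle X h).card :=
        lt_of_le_of_ne ((hv h).le_card _) hh
      obtain ⟨d, hd, hrem⟩ := (hv h).exists_removable _ hlt
      have hXd : X d = some h := mem_bundle.mp hd
      set Y := Function.update X d none with hYdef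
      have hbY : ∀ g, bundle Y g = (bundle X g).erase d := by
        intro g; rw [hYdef, bundle_update]; simp
      have husw : USW v Y = USW v X := by
        unfold USW
        apply Finset.sum_congr rfl
        intro g _
        rw [hbY g]
        rcases eq_or_ne g h with rfl | hg
        · exact hrem
        · have hnotm : d ∉ bundle X g := by
            rw [mem_bundle, hXd]
            simp [Ne.symm hg]
          rw [Finset.erase_eq_of_notMem hnotm]
      have hcard : (∑ g, (bundle Y g).card) ≤ k := by
        have hle : ∀ g ∈ Finset.univ, (bundle Y g).card ≤ (bundle X g).card := by
          intro g _
          rw [hbY]; exact Finset.card_le_card (Finset.erase_subset _ _)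
        have hlt' : (bundle Y h).card < (bundle X h).card := by
          rw [hbY]; exact Finset.card_erase_lt_of_mem hd
        have := Finset.sum_lt_sum hle ⟨h, Finset.mem_univ h, hlt'⟩
        omega
      obtain ⟨X', h1, h2⟩ := ih Y hcard
      exact ⟨X', h1, h2.trans husw⟩

/-- For every profile of matroid rank hospital valuations and strict complete doctor
preference orders, there exists a stable allocation maximizing hospital utilitarian
welfare over all allocations. -/
theorem exists_stable_max_usw {n m : ℕ} (v : Fin n → Finset (Fin m) → ℤ)
    (P : Fin m → Fin n → Fin n → Prop)
    (hv : ∀ h, IsMRF (v h)) (hP : ∀ d, IsStrictTotalOrder (Fin n) (P d)) :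
    ∃ X : Fin m → Option (Fin n), Stable v P X ∧
      ∀ Y : Fin m → Option (Fin n), USW v Y ≤ USW v X := by
  classical
  obtain ⟨X₀, -, hX₀⟩ := Finset.exists_max_image
    (Finset.univ : Finset (Fin m → Option (Fin n))) (USW v) ⟨fun _ => none, Finset.mem_univ _⟩
  set M := USW v X₀ with hM
  obtain ⟨X₁, hX₁nr, hX₁usw⟩ := exists_nonredundant v hv X₀
  set T : Finset (Fin m → Option (Fin n)) :=
    Finset.univ.filter (fun X => NonRedundant v X ∧ USW v X = M) with hT
  have hX₁T : X₁ ∈ T := by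
    rw [hT, Finset.mem_filter]
    exact ⟨Finset.mem_univ _, hX₁nr, hX₁usw⟩
  obtain ⟨X, hXT, hXmax⟩ := Finset.exists_max_image T
    (fun X => ∑ d', rnk P d' (X d')) ⟨X₁, hX₁T⟩
  have hXnr : NonRedundant v X := ((Finset.mem_filter.mp hXT).2).1
  have hXusw : USW v X = M := ((Finset.mem_filter.mp hXT).2).2
  refine ⟨X, ⟨hXnr, ?_⟩, fun Y => by rw [hXusw]; exact hX₀ Y (Finset.mem_univ Y)⟩
  rintro ⟨h, S, hS1, hS2, hS3⟩
  obtain ⟨d, hdS, hdB, haug⟩ := (hv h).exists_augment hS2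
  have hXd_ne : X d ≠ some h := fun hc => hdB (mem_bundle.mpr hc)
  have hpref : OptStrictPref P d (some h) (X d) := (hS3 d hdS).resolve_left hXd_ne
  set Y := Function.update X d (some h) with hYdef
  have hbYh : bundle Y h = insert d (bundle X h) := by
    rw [hYdef, bundle_update]
    simp [Finset.erase_eq_of_notMem hdB]
  have hbYg : ∀ g, g ≠ h → bundle Y g = (bundle X g).erase d := by
    intro g hg
    rw [hYdef, bundle_update, if_neg]
    simp only [Option.some.injEq]
    exact fun hc => hg hc.symm
  have hYusw_le : USW v Y ≤ M := hX₀ Y (Finset.mem_univ Y)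
  cases hXd : X d with
  | none =>
    have husw : USW v Y = USW v X + 1 := by
      unfold USW
      have key : ∀ g, v g (bundle Y g) = v g (bundle X g) + (if g = h then (1 : ℤ) else 0) := by
        intro g
        rcases eq_or_ne g h with rfl | hg
        · rw [hbYh, haug]; simp
        · have hnm : d ∉ bundle X g := by rw [mem_bundle, hXd]; simp
          rw [hbYg g hg, Finset.erase_eq_of_notMem hnm, if_neg hg, add_zero]
      rw [Finset.sum_congr rfl (fun g _ => key g), Finset.sum_add_distrib]
      simp
    omega
  | some h' =>
    have hg' : h' ≠ h := fun hc => hXd_ne (hc ▸ hXd)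
    have hdB' : d ∈ bundle X h' := mem_bundle.mpr hXd
    have hcard_pos : 0 < (bundle X h').card := Finset.card_pos.mpr ⟨d, hdB'⟩
    have hvh' : v h' ((bundle X h').erase d) = v h' (bundle X h') - 1 := by
      have h1 := (hv h').le_card ((bundle X h').erase d)
      have h2 := (hv h').erase_eq hdB'
      have h3 := hXnr h'
      have h4 : ((bundle X h').erase d).card = (bundle X h').card - 1 :=
        Finset.card_erase_of_mem hdB'
      omega
    have hYnr : NonRedundant v Y := by
      intro g
      rcases eq_or_ne g h with rfl | hgh
      · rw [hbYh, haug, hXnr g, Finset.card_insert_of_notMem hdB]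
        push_cast
        ring
      · rw [hbYg g hgh]
        rcases eq_or_ne g h' with rfl | hgg
        · rw [hvh', hXnr g, Finset.card_erase_of_mem hdB']
          have h4 : ((bundle X g).erase d).card = (bundle X g).card - 1 :=
            Finset.card_erase_of_mem hdB'
          omega
        · have hnm : d ∉ bundle X g := by
            rw [mem_bundle, hXd]
            simp only [Option.some.injEq]
            exact fun hc => hgg hc.symm
          rw [Finset.erase_eq_of_notMem hnm]
          exact hXnr g
    have hYusw : USW v Y = M := by
      unfold USW
      have key : ∀ g, v g (bundle Y g) =
          v g (bundle X g) + ((if g = h then (1 : ℤ) else 0) - (if g = h' then 1 else 0)) := by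
        intro g
        rcases eq_or_ne g h with rfl | hgh
        · rw [hbYh, haug, if_pos rfl, if_neg (Ne.symm hg')]; ring
        · rw [hbYg g hgh, if_neg hgh]
          rcases eq_or_ne g h' with rfl | hgg
          · rw [hvh', if_pos rfl]; ring
          · have hnm : d ∉ bundle X g := by
              rw [mem_bundle, hXd]
              simp only [Option.some.injEq]
              exact fun hc => hgg hc.symm
            rw [Finset.erase_eq_of_notMem hnm, if_neg hgg]; ring
      rw [Finset.sum_congr rfl (fun g _ => key g), Finset.sum_add_distrib,
        Finset.sum_sub_distrib]
      simp only [Finset.sum_ite_eq', Finset.mem_univ, if_pos, sub_self, add_zero]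
      exact hXusw
    have hYT : Y ∈ T := by
      rw [hT, Finset.mem_filter]
      exact ⟨Finset.mem_univ _, hYnr, hYusw⟩
    have hle := hXmax Y hYT
    have hpref' : P d h h' := by
      rw [hXd] at hpref
      exact hpref
    have hlt : (∑ d', rnk P d' (X d')) < ∑ d', rnk P d' (Y d') := by
      apply Finset.sum_lt_sum
      · intro i _
        rcases eq_or_ne i d with rfl | hi
        · rw [hYdef, Function.update_self, hXd]
          exact le_of_lt (rnk_lt (hP i) hpref')
        · rw [hYdef, Function.update_of_ne hi]
      · refine ⟨d, Finset.mem_univ d, ?_⟩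
        rw [hYdef, Function.update_self, hXd]
        exact rnk_lt (hP d) hpref'
    omega
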